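/- On the unit circle ∂Ω = {(x,y) : x²+y²=1}, the function g₁(x,y) = |y|^{-1/2} has distribution function α_{g₁}(s) = 2π for 0<s<1 and α_{g₁}(s) = 4 arcsin(1/s²) for s ≥ 1, and decreasing rearrangement g₁*(t) = (csc(t/4))^{1/2}; consequently g₁ ∈ L^{2,∞}(∂Ω) but lim_{t→0} t^{1/2} g₁*(t) > 0, so g₁ does not lie in the closure of C¹(∂Ω) in L^{2,∞}(∂Ω). -/

import Mathlib

open MeasureTheory Filter Set Topology Real

/-- One-dimensional decreasing rearrangement of `f` with respect to the measure `σ`. -/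
noncomputable def rearr {α : Type*} [MeasurableSpace α] (σ : Measure α) (f : α → ℝ) (t : ℝ) : ℝ :=
  sInf {s : ℝ | 0 < s ∧ (σ {x | s < |f x|}).toReal < t}

/-- Arclength (1-dimensional Hausdorff) measure on the unit circle `∂Ω ⊂ ℝ²`. -/
noncomputable def circleMeasure : Measure (EuclideanSpace ℝ (Fin 2)) :=
  (μH[1]).restrict (Metric.sphere (0 : EuclideanSpace ℝ (Fin 2)) 1)

/-- `g₁(x,y) = |y|^{-1/2}` on the unit circle. -/
noncomputable def gOne : EuclideanSpace ℝ (Fin 2) → ℝ := fun x => |x 1| ^ (-(1 / 2) : ℝ)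

open scoped ENNReal NNReal

namespace CWE
open Complex

lemma cm_eq (θ : ℝ) : circleMap 0 1 θ = Complex.exp (θ * Complex.I) := by
  simp [circleMap]

lemma cm_im (θ : ℝ) : (circleMap 0 1 θ).im = Real.sin θ := by
  rw [cm_eq, Complex.exp_ofReal_mul_I_im]

lemma cm_abs (θ : ℝ) : ‖circleMap 0 1 θ‖ = 1 := by
  simpa using norm_circleMap_zero 1 θ

lemma cm_inj {θ₁ θ₂ : ℝ} (h12 : |θ₁ - θ₂| < 2 * π)
    (h : circleMap 0 1 θ₁ = circleMap 0 1 θ₂) : θ₁ = θ₂ := by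
  rw [cm_eq, cm_eq, Complex.exp_eq_exp_iff_exists_int] at h
  obtain ⟨n, hn⟩ := h
  have him := congrArg Complex.im hn
  simp [Complex.add_im, Complex.mul_im] at him
  -- him : θ₁ = θ₂ + n * (2 * π)  (roughly)
  have hn0 : n = 0 := by
    by_contra hne
    have h1 : (1 : ℝ) ≤ |(n : ℝ)| := by
      exact_mod_cast Int.one_le_abs (by exact_mod_cast hne)
    have : |θ₁ - θ₂| = |(n : ℝ)| * (2 * π) := by
      rw [him, add_sub_cancel_left, abs_mul, abs_of_pos (by positivity : (0:ℝ) < 2*π)]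
    nlinarith [Real.pi_pos]
  rw [hn0] at him
  simpa using him


lemma arc_le (a b : ℝ) :
    μH[1] (circleMap 0 1 '' Ioo a b) ≤ ENNReal.ofReal (b - a) := by
  have h := (lipschitzWith_circleMap 0 1).hausdorffMeasure_image_le zero_le_one (Ioo a b)
  simp only [Real.nnabs, abs_one] at h
  rw [MeasureTheory.hausdorffMeasure_real] at h
  calc μH[1] (circleMap 0 1 '' Ioo a b) ≤ _ := h
    _ ≤ ENNReal.ofReal (b - a) := by
        rw [Real.volume_Ioo]
        simp
        exact le_of_eq (by convert one_mul (ENNReal.ofReal (b - a)) using 2; exact ENNReal.coe_eq_one.mpr (NNReal.eq (by show |(1:ℝ)| = 1; simp)))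

lemma arc_rot (a δ : ℝ) :
    μH[1] (circleMap 0 1 '' Ioo a (a + δ)) = μH[1] (circleMap 0 1 '' Ioo 0 δ) := by
  have hiso : Isometry (fun z : ℂ => circleMap 0 1 a * z) := by
    apply Isometry.of_dist_eq
    intro x y
    rw [Complex.dist_eq, Complex.dist_eq, ← mul_sub, norm_mul, cm_abs, one_mul]
  have himg : circleMap 0 1 '' Ioo a (a + δ)
      = (fun z : ℂ => circleMap 0 1 a * z) '' (circleMap 0 1 '' Ioo 0 δ) := by
    rw [Set.image_image]
    have : Ioo a (a + δ) = (fun x => a + x) '' Ioo 0 δ := by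
      rw [Set.image_const_add_Ioo]; simp
    rw [this, Set.image_image]
    apply Set.image_congr
    intro θ _
    rw [cm_eq, cm_eq, cm_eq, Complex.ofReal_add, add_mul, Complex.exp_add]
  rw [himg, hiso.hausdorffMeasure_image (Or.inl zero_le_one)]


lemma arc_meas {a b : ℝ} (h2 : b - a ≤ 2 * π) :
    MeasurableSet (circleMap 0 1 '' Ioo a b) := by
  rcases le_or_gt b a with hba | hab
  · rw [Set.Ioo_eq_empty (by exact not_lt.mpr hba)]
    simp
  · have hset : circleMap 0 1 '' Ioo a b
        = (circleMap 0 1 '' Icc a b) \ {circleMap 0 1 a, circleMap 0 1 b} := by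
      ext z
      constructor
      · rintro ⟨θ, hθ, rfl⟩
        refine ⟨⟨θ, Ioo_subset_Icc_self hθ, rfl⟩, ?_⟩
        simp only [Set.mem_insert_iff, Set.mem_singleton_iff]
        push_neg
        constructor
        · intro hne
          have : θ = a := cm_inj (by rw [abs_of_pos (by linarith [hθ.1, hθ.2] : 0 < θ - a)]; linarith [hθ.1, hθ.2]) hne
          linarith [hθ.1]
        · intro hne
          have : θ = b := cm_inj (by rw [abs_of_neg (by linarith [hθ.1, hθ.2] : θ - b < 0)]; linarith [hθ.1, hθ.2]) hne
          linarith [hθ.2]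
      · rintro ⟨⟨θ, hθ, rfl⟩, hz⟩
        simp only [Set.mem_insert_iff, Set.mem_singleton_iff] at hz
        push_neg at hz
        have h1 : θ ≠ a := fun h => hz.1 (by rw [h])
        have h3 : θ ≠ b := fun h => hz.2 (by rw [h])
        exact ⟨θ, ⟨lt_of_le_of_ne hθ.1 (Ne.symm h1), lt_of_le_of_ne hθ.2 h3⟩, rfl⟩
    rw [hset]
    exact ((isCompact_Icc.image (continuous_circleMap 0 1)).measurableSet).diff
      (Set.Finite.measurableSet (by simp [Set.finite_singleton]))


lemma hm_singleton (z : ℂ) : μH[1] ({z} : Set ℂ) = 0 := by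
  haveI : NoAtoms (μH[1] : Measure ℂ) := Measure.noAtoms_hausdorff ℂ one_pos
  exact (Measure.nullSingletonClass_hausdorff ℂ one_pos).measure_singleton z

/-- images of disjoint angle intervals within a window of length `< 2π` are disjoint -/
lemma arc_disjoint {s t : Set ℝ} (hs : s ⊆ Ioo 0 (2*π)) (ht : t ⊆ Ioo 0 (2*π))
    (hst : Disjoint s t) :
    Disjoint (circleMap 0 1 '' s) (circleMap 0 1 '' t) := by
  rw [Set.disjoint_left]
  rintro z ⟨θ₁, h1, rfl⟩ ⟨θ₂, h2, he⟩
  have e1 := hs h1; have e2 := ht h2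
  have : θ₂ = θ₁ := cm_inj (by rw [abs_lt]; constructor <;> nlinarith [e1.1, e1.2, e2.1, e2.2]) he
  subst this
  exact (Set.disjoint_left.mp hst h1) h2

lemma arc_add {x y : ℝ} (hx : 0 < x) (hy : 0 < y) (hxy : x + y ≤ 2 * π) :
    μH[1] (circleMap 0 1 '' Ioo 0 (x + y))
      = μH[1] (circleMap 0 1 '' Ioo 0 x) + μH[1] (circleMap 0 1 '' Ioo x (x + y)) := by
  have hsplit : Ioo 0 (x + y) = (Ioo 0 x ∪ Ioo x (x + y)) ∪ {x} := by
    ext θ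
    simp only [Set.mem_Ioo, Set.mem_union, Set.mem_singleton_iff]
    constructor
    · rintro ⟨h0, h1⟩
      rcases lt_trichotomy θ x with h | h | h
      · exact Or.inl (Or.inl ⟨h0, h⟩)
      · exact Or.inr h
      · exact Or.inl (Or.inr ⟨h, h1⟩)
    · rintro ((⟨h0, h1⟩ | ⟨h0, h1⟩) | rfl) <;> constructor <;> linarith
  rw [hsplit, Set.image_union, Set.image_union, Set.image_singleton]
  have hpi := Real.pi_pos
  have hdisj : Disjoint (circleMap 0 1 '' Ioo 0 x) (circleMap 0 1 '' Ioo x (x + y)) := by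
    apply arc_disjoint
    · intro θ hθ; exact ⟨hθ.1, by linarith [hθ.2]⟩
    · intro θ hθ; exact ⟨by linarith [hθ.1], by linarith [hθ.2]⟩
    · rw [Set.disjoint_left]
      rintro θ h1 h2
      exact absurd h1.2 (not_lt.mpr h2.1.le)
  have hmeas : MeasurableSet (circleMap 0 1 '' Ioo x (x + y)) := arc_meas (by linarith)
  have h1 : μH[1] ((circleMap 0 1 '' Ioo 0 x ∪ circleMap 0 1 '' Ioo x (x + y))
        ∪ {circleMap 0 1 x})
      = μH[1] (circleMap 0 1 '' Ioo 0 x ∪ circleMap 0 1 '' Ioo x (x + y)) := by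
    apply le_antisymm
    · refine le_trans (measure_union_le _ _) ?_
      rw [hm_singleton, add_zero]
    · exact measure_mono Set.subset_union_left
  rw [h1, measure_union hdisj hmeas]

lemma arc_nsmul (n : ℕ) {δ : ℝ} (hδ : 0 < δ) (h : (n : ℝ) * δ ≤ 2 * π) :
    μH[1] (circleMap 0 1 '' Ioo 0 ((n : ℝ) * δ)) = n * μH[1] (circleMap 0 1 '' Ioo 0 δ) := by
  induction n with
  | zero => simp
  | succ n ih =>
    have hn : (n : ℝ) * δ ≤ 2 * π := by push_cast at h; nlinarith
    rcases Nat.eq_zero_or_pos n with rfl | hn0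
    · simp
    · have hnpos : 0 < (n : ℝ) * δ := by positivity
      have hcast : ((n + 1 : ℕ) : ℝ) * δ = (n : ℝ) * δ + δ := by push_cast; ring
      rw [hcast, arc_add hnpos hδ (by push_cast at h ⊢; linarith), ih hn,
        arc_rot ((n : ℝ) * δ) δ]
      push_cast
      ring

lemma lipschitz_im : LipschitzWith 1 Complex.im := by
  apply LipschitzWith.of_dist_le_mul
  intro x y
  simpa [Real.dist_eq, Complex.dist_eq, Complex.sub_im] using Complex.abs_im_le_norm (x - y)

lemma arc_lower {δ : ℝ} (h0 : 0 ≤ δ) (h : δ ≤ π / 2) :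
    ENNReal.ofReal (Real.sin δ) ≤ μH[1] (circleMap 0 1 '' Ioo 0 δ) := by
  have h1 := lipschitz_im.hausdorffMeasure_image_le zero_le_one
    (circleMap 0 1 '' Ioo 0 δ)
  simp only [ENNReal.coe_one, one_rpow, one_mul] at h1
  have h2 : Ioo 0 (Real.sin δ) ⊆ Complex.im '' (circleMap 0 1 '' Ioo 0 δ) := by
    intro y hy
    have hy1 : y ≤ 1 := le_trans hy.2.le (Real.sin_le_one δ)
    have hsd : Real.sin δ ≤ 1 := Real.sin_le_one δ
    refine ⟨circleMap 0 1 (Real.arcsin y), ⟨Real.arcsin y, ⟨?_, ?_⟩, rfl⟩, ?_⟩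
    · exact Real.arcsin_pos.mpr hy.1
    · exact (Real.arcsin_lt_iff_lt_sin ⟨by linarith [hy.1], hy1⟩
        ⟨by linarith [Real.pi_pos], h⟩).mpr hy.2
    · rw [cm_im, Real.sin_arcsin (by linarith [hy.1]) hy1]
  calc ENNReal.ofReal (Real.sin δ)
      = μH[1] (Ioo 0 (Real.sin δ)) := by
        rw [MeasureTheory.hausdorffMeasure_real, Real.volume_Ioo, sub_zero]
    _ ≤ μH[1] (Complex.im '' (circleMap 0 1 '' Ioo 0 δ)) := measure_mono h2
    _ ≤ _ := by simpa using h1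


lemma arc_measure {δ : ℝ} (h0 : 0 ≤ δ) (h2 : δ ≤ 2 * π) :
    μH[1] (circleMap 0 1 '' Ioo 0 δ) = ENNReal.ofReal δ := by
  refine le_antisymm (by simpa using arc_le 0 δ) ?_
  rcases h0.eq_or_lt with rfl | hδ
  · simp
  -- lower bound via n-fold subdivision
  have key : ∀ n : ℕ, 0 < n → δ / n ≤ π / 2 → δ / n ≤ 1 →
      ENNReal.ofReal (δ - δ^3 / 4 * (1 / (n:ℝ))^2) ≤ μH[1] (circleMap 0 1 '' Ioo 0 δ) := by
    intro n hn h1 hle1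
    have hnR : (0:ℝ) < n := by exact_mod_cast hn
    have hδn : 0 < δ / n := by positivity
    have hcan : (n : ℝ) * (δ / n) = δ := by field_simp
    have hL : μH[1] (circleMap 0 1 '' Ioo 0 δ) = n * μH[1] (circleMap 0 1 '' Ioo 0 (δ / n)) := by
      have h' := arc_nsmul n hδn (by rw [hcan]; exact h2)
      rw [hcan] at h'
      exact h'
    have hlow : ENNReal.ofReal (Real.sin (δ / n)) ≤ μH[1] (circleMap 0 1 '' Ioo 0 (δ / n)) :=
      arc_lower hδn.le h1
    have hsin : δ / n - (δ / n)^3 / 4 ≤ Real.sin (δ / n) :=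
      by have := Real.sin_gt_sub_cube hδn; nlinarith [pow_pos hδn 3]
    calc ENNReal.ofReal (δ - δ^3 / 4 * (1 / (n:ℝ))^2)
        = ENNReal.ofReal ((n : ℝ) * (δ / n - (δ / n)^3 / 4)) := by
          congr 1; field_simp
      _ ≤ ENNReal.ofReal ((n : ℝ) * Real.sin (δ / n)) := by
          apply ENNReal.ofReal_le_ofReal
          exact mul_le_mul_of_nonneg_left hsin hnR.le
      _ = (n : ℝ≥0∞) * ENNReal.ofReal (Real.sin (δ / n)) := by
          rw [ENNReal.ofReal_mul hnR.le]; congr 1; simp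
      _ ≤ (n : ℝ≥0∞) * μH[1] (circleMap 0 1 '' Ioo 0 (δ / n)) := by
          exact mul_le_mul_right hlow _
      _ = μH[1] (circleMap 0 1 '' Ioo 0 δ) := hL.symm
  -- take the limit
  have htend : Tendsto (fun n : ℕ => ENNReal.ofReal (δ - δ^3 / 4 * (1 / (n:ℝ))^2)) atTop
      (𝓝 (ENNReal.ofReal δ)) := by
    apply ENNReal.tendsto_ofReal
    have : Tendsto (fun n : ℕ => (1 / (n:ℝ))^2) atTop (𝓝 0) := by
      have h : Tendsto (fun n : ℕ => (1 / (n:ℝ))^2) atTop (𝓝 ((0:ℝ)^2)) := (tendsto_one_div_atTop_nhds_zero_nat).pow 2; rwa [zero_pow two_ne_zero] at h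
    have := this.const_mul (δ^3 / 4)
    simpa using tendsto_const_nhds.sub this
  apply le_of_tendsto htend
  have hks : Tendsto (fun n : ℕ => δ / n) atTop (𝓝 0) := tendsto_const_div_atTop_nhds_zero_nat δ
  have h1 : ∀ᶠ n : ℕ in atTop, δ / n ≤ π / 2 :=
    hks.eventually_le_const (by positivity)
  have h2' : ∀ᶠ n : ℕ in atTop, δ / n ≤ 1 := hks.eventually_le_const one_pos
  filter_upwards [h1, h2', eventually_gt_atTop 0] with n ha hb hc
  exact key n hc ha hb

lemma arc_measure' {a b : ℝ} (hab : a ≤ b) (h : b - a ≤ 2 * π) :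
    μH[1] (circleMap 0 1 '' Ioo a b) = ENNReal.ofReal (b - a) := by
  have : b = a + (b - a) := by ring
  rw [this, arc_rot a (b - a), arc_measure (by linarith) h]
  congr 1
  ring


/-- the circle as image of `Ioc 0 (2π)` -/
lemma circle_eq : Metric.sphere (0:ℂ) 1 = circleMap 0 1 '' Ioc 0 (2*π) := by
  have := image_circleMap_Ioc 0 1
  simp only [abs_one] at this
  exact this.symm

lemma inter_circle (P : ℝ → Prop) :
    {z : ℂ | P z.im} ∩ Metric.sphere 0 1
      = circleMap 0 1 '' {θ ∈ Ioc 0 (2*π) | P (Real.sin θ)} := by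
  rw [circle_eq]
  ext z
  constructor
  · rintro ⟨hP, θ, hθ, rfl⟩
    exact ⟨θ, ⟨hθ, by rwa [← cm_im θ]⟩, rfl⟩
  · rintro ⟨θ, ⟨hθ, hP⟩, rfl⟩
    exact ⟨by simpa [cm_im] using hP, θ, hθ, rfl⟩

/-- on `(0,π)`, `sin φ < m` iff `φ` near the ends -/
lemma sin_lt_iff {m φ : ℝ} (hm0 : 0 < m) (hm1 : m ≤ 1) (hφ0 : 0 < φ) (hφπ : φ < π) :
    Real.sin φ < m ↔ (φ < Real.arcsin m ∨ π - Real.arcsin m < φ) := by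
  set a := Real.arcsin m with ha
  have ha0 : 0 < a := Real.arcsin_pos.mpr hm0
  have ha2 : a ≤ π / 2 := Real.arcsin_le_pi_div_two m
  have hsa : Real.sin a = m := Real.sin_arcsin (by linarith) hm1
  have hpi := Real.pi_pos
  rcases le_or_gt φ (π/2) with hle | hgt
  · have hmono : Real.sin φ < Real.sin a ↔ φ < a :=
      Real.strictMonoOn_sin.lt_iff_lt ⟨by linarith, hle⟩ ⟨by linarith, ha2⟩
    rw [hsa] at hmono
    rw [hmono]
    constructor
    · exact Or.inl
    · rintro (h | h)
      · exact h
      · linarith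
  · have h1 : Real.sin φ = Real.sin (π - φ) := (Real.sin_pi_sub φ).symm
    have hmono : Real.sin (π - φ) < Real.sin a ↔ π - φ < a :=
      Real.strictMonoOn_sin.lt_iff_lt ⟨by linarith, by linarith⟩ ⟨by linarith, ha2⟩
    rw [hsa] at hmono
    rw [h1, hmono]
    constructor
    · intro h; right; linarith
    · rintro (h | h)
      · linarith
      · linarith

/-- the four-arc decomposition of the sublevel set of `|sin|` on `(0, 2π]` -/
lemma window_eq {m : ℝ} (hm0 : 0 < m) (hm1 : m ≤ 1) :
    {θ ∈ Ioc 0 (2*π) | 0 < |Real.sin θ| ∧ |Real.sin θ| < m}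
      = Ioo 0 (Real.arcsin m) ∪ Ioo (π - Real.arcsin m) π
        ∪ Ioo π (π + Real.arcsin m) ∪ Ioo (2*π - Real.arcsin m) (2*π) := by
  set a := Real.arcsin m with ha
  have ha0 : 0 < a := Real.arcsin_pos.mpr hm0
  have ha2 : a ≤ π / 2 := Real.arcsin_le_pi_div_two m
  have hpi := Real.pi_pos
  ext θ
  simp only [Set.mem_setOf_eq, Set.mem_Ioc, Set.mem_union, Set.mem_Ioo]
  constructor
  · rintro ⟨⟨hθ0, hθ2⟩, habs0, habsm⟩
    have hθπ : θ ≠ π := by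
      rintro rfl; simp [Real.sin_pi] at habs0
    have hθ2π : θ ≠ 2*π := by
      rintro rfl; simp [Real.sin_two_pi] at habs0
    rcases lt_trichotomy θ π with h | h | h
    · have hpos : 0 < Real.sin θ := Real.sin_pos_of_pos_of_lt_pi hθ0 h
      rw [abs_of_pos hpos] at habsm
      rcases (sin_lt_iff hm0 hm1 hθ0 h).mp habsm with h' | h'
      · exact Or.inl (Or.inl (Or.inl ⟨hθ0, h'⟩))
      · exact Or.inl (Or.inl (Or.inr ⟨h', h⟩))
    · exact absurd h hθπ
    · have hθ2' : θ < 2*π := lt_of_le_of_ne hθ2 hθ2π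
      have hφ0 : 0 < θ - π := by linarith
      have hφπ : θ - π < π := by linarith
      have hsin : Real.sin θ = -Real.sin (θ - π) := by
        rw [← Real.sin_add_pi (θ - π)]; congr 1; ring
      have hpos : 0 < Real.sin (θ - π) := Real.sin_pos_of_pos_of_lt_pi hφ0 hφπ
      have habs : |Real.sin θ| = Real.sin (θ - π) := by rw [hsin, abs_neg, abs_of_pos hpos]
      rw [habs] at habsm
      rcases (sin_lt_iff hm0 hm1 hφ0 hφπ).mp habsm with h' | h'
      · exact Or.inl (Or.inr ⟨h, by linarith⟩)
      · exact Or.inr ⟨by linarith, hθ2'⟩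
  · intro hU
    have key : (0 < θ ∧ θ < π ∧ Real.sin θ < m) ∨ (π < θ ∧ θ < 2*π ∧ Real.sin (θ - π) < m) := by
      rcases hU with ((⟨h1, h2⟩ | ⟨h1, h2⟩) | ⟨h1, h2⟩) | ⟨h1, h2⟩
      · exact Or.inl ⟨h1, by linarith, (sin_lt_iff hm0 hm1 h1 (by linarith)).mpr (Or.inl h2)⟩
      · exact Or.inl ⟨by linarith, h2, (sin_lt_iff hm0 hm1 (by linarith) h2).mpr (Or.inr h1)⟩
      · refine Or.inr ⟨h1, by linarith, (sin_lt_iff hm0 hm1 (by linarith) (by linarith)).mpr (Or.inl (by linarith))⟩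
      · refine Or.inr ⟨by linarith, h2, (sin_lt_iff hm0 hm1 (by linarith) (by linarith)).mpr (Or.inr (by linarith))⟩
    rcases key with ⟨h1, h2, h3⟩ | ⟨h1, h2, h3⟩
    · have hpos : 0 < Real.sin θ := Real.sin_pos_of_pos_of_lt_pi h1 h2
      exact ⟨⟨h1, by linarith⟩, by rw [abs_of_pos hpos]; exact ⟨hpos, h3⟩⟩
    · have hφ0 : 0 < θ - π := by linarith
      have hφπ : θ - π < π := by linarith
      have hpos : 0 < Real.sin (θ - π) := Real.sin_pos_of_pos_of_lt_pi hφ0 hφπ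
      have hsin : Real.sin θ = -Real.sin (θ - π) := by
        rw [← Real.sin_add_pi (θ - π)]; congr 1; ring
      have habs : |Real.sin θ| = Real.sin (θ - π) := by rw [hsin, abs_neg, abs_of_pos hpos]
      exact ⟨⟨by linarith, by linarith⟩, by rw [habs]; exact ⟨hpos, h3⟩⟩


lemma arcs_union {s t : Set ℝ} (hs : s ⊆ Ioo 0 (2*π)) (ht : t ⊆ Ioo 0 (2*π))
    (hst : Disjoint s t) (hmt : MeasurableSet (circleMap 0 1 '' t)) :
    μH[1] (circleMap 0 1 '' (s ∪ t))
      = μH[1] (circleMap 0 1 '' s) + μH[1] (circleMap 0 1 '' t) := by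
  rw [Set.image_union, measure_union (arc_disjoint hs ht hst) hmt]

lemma measure_window {m : ℝ} (hm0 : 0 < m) (hm1 : m ≤ 1) :
    μH[1] ({z : ℂ | 0 < |z.im| ∧ |z.im| < m} ∩ Metric.sphere 0 1)
      = ENNReal.ofReal (4 * Real.arcsin m) := by
  have hpi := Real.pi_pos
  set a := Real.arcsin m with ha
  have ha0 : 0 < a := Real.arcsin_pos.mpr hm0
  have ha2 : a ≤ π / 2 := Real.arcsin_le_pi_div_two m
  rw [inter_circle (fun y => 0 < |y| ∧ |y| < m), window_eq hm0 hm1, ← ha]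
  have m1 : MeasurableSet (circleMap 0 1 '' Ioo (π - a) π) := arc_meas (by linarith)
  have m2 : MeasurableSet (circleMap 0 1 '' Ioo π (π + a)) := arc_meas (by linarith)
  have m3 : MeasurableSet (circleMap 0 1 '' Ioo (2*π - a) (2*π)) := arc_meas (by linarith)
  have s1 : Ioo (0:ℝ) a ⊆ Ioo 0 (2*π) := Set.Ioo_subset_Ioo le_rfl (by linarith)
  have s2 : Ioo (π - a) π ⊆ Ioo (0:ℝ) (2*π) := Set.Ioo_subset_Ioo (by linarith) (by linarith)
  have s3 : Ioo π (π + a) ⊆ Ioo (0:ℝ) (2*π) := Set.Ioo_subset_Ioo (by linarith) (by linarith)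
  have s4 : Ioo (2*π - a) (2*π) ⊆ Ioo (0:ℝ) (2*π) := Set.Ioo_subset_Ioo (by linarith) le_rfl
  have d12 : Disjoint (Ioo (0:ℝ) a) (Ioo (π - a) π) := by
    rw [Set.disjoint_left]; rintro θ h1 h2; have := h1.2; have := h2.1; linarith
  have d123 : Disjoint (Ioo (0:ℝ) a ∪ Ioo (π - a) π) (Ioo π (π + a)) := by
    rw [Set.disjoint_left]; rintro θ (h1 | h1) h2 <;>
      [linarith [h1.2, h2.1]; linarith [h1.2, h2.1]]
  have d1234 : Disjoint (Ioo (0:ℝ) a ∪ Ioo (π - a) π ∪ Ioo π (π + a)) (Ioo (2*π - a) (2*π)) := by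
    rw [Set.disjoint_left]; rintro θ ((h1 | h1) | h1) h2 <;>
      [linarith [h1.2, h2.1]; linarith [h1.2, h2.1]; linarith [h1.2, h2.1]]
  have sub123 : Ioo (0:ℝ) a ∪ Ioo (π - a) π ∪ Ioo π (π + a) ⊆ Ioo 0 (2*π) := by
    intro θ hθ
    rcases hθ with (h | h) | h
    · exact s1 h
    · exact s2 h
    · exact s3 h
  have sub12 : Ioo (0:ℝ) a ∪ Ioo (π - a) π ⊆ Ioo 0 (2*π) := by
    intro θ hθ
    rcases hθ with h | h
    · exact s1 h
    · exact s2 h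
  rw [arcs_union sub123 s4 d1234 m3,
     arcs_union sub12 s3 d123 m2,
     arcs_union s1 s2 d12 m1,
     arc_measure' ha0.le (by linarith),
     arc_measure' (by linarith : π - a ≤ π) (by linarith),
     arc_measure' (by linarith : π ≤ π + a) (by linarith),
     arc_measure' (by linarith : 2*π - a ≤ 2*π) (by linarith)]
  rw [← ENNReal.ofReal_add (by linarith) (by linarith),
      ← ENNReal.ofReal_add (by linarith) (by linarith),
      ← ENNReal.ofReal_add (by linarith) (by linarith)]
  congr 1
  ring

lemma window_eq' :
    {θ ∈ Ioc 0 (2*π) | 0 < |Real.sin θ|} = Ioo 0 π ∪ Ioo π (2*π) := by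
  have hpi := Real.pi_pos
  ext θ
  simp only [Set.mem_setOf_eq, Set.mem_Ioc, Set.mem_union, Set.mem_Ioo, abs_pos]
  constructor
  · rintro ⟨⟨h0, h2⟩, hne⟩
    have hθπ : θ ≠ π := by rintro rfl; simp [Real.sin_pi] at hne
    have hθ2π : θ ≠ 2*π := by rintro rfl; simp [Real.sin_two_pi] at hne
    rcases lt_trichotomy θ π with h | h | h
    · exact Or.inl ⟨h0, h⟩
    · exact absurd h hθπ
    · exact Or.inr ⟨h, lt_of_le_of_ne h2 hθ2π⟩
  · rintro (⟨h0, h1⟩ | ⟨h0, h1⟩)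
    · exact ⟨⟨h0, by linarith⟩, ne_of_gt (Real.sin_pos_of_pos_of_lt_pi h0 h1)⟩
    · refine ⟨⟨by linarith, by linarith⟩, ?_⟩
      have : Real.sin θ = -Real.sin (θ - π) := by
        rw [← Real.sin_add_pi (θ - π)]; congr 1; ring
      have hpos : 0 < Real.sin (θ - π) :=
        Real.sin_pos_of_pos_of_lt_pi (by linarith) (by linarith)
      rw [this]
      exact ne_of_lt (by linarith)

lemma measure_window' :
    μH[1] ({z : ℂ | 0 < |z.im|} ∩ Metric.sphere 0 1) = ENNReal.ofReal (2 * π) := by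
  have hpi := Real.pi_pos
  rw [inter_circle (fun y => 0 < |y|), window_eq',
    arcs_union (Set.Ioo_subset_Ioo le_rfl (by linarith))
      (Set.Ioo_subset_Ioo (by linarith) le_rfl)
      (by rw [Set.disjoint_left]; rintro θ h1 h2; linarith [h1.2, h2.1])
      (arc_meas (by linarith)),
    arc_measure' (by linarith) (by linarith),
    arc_measure' (by linarith) (by linarith),
    ← ENNReal.ofReal_add (by linarith) (by linarith)]
  congr 1
  ring

lemma circle_total : μH[1] (Metric.sphere (0:ℂ) 1) ≤ ENNReal.ofReal (2 * π) := by
  have hpi := Real.pi_pos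
  rw [circle_eq]
  have : Ioc (0:ℝ) (2*π) = Ioo 0 (2*π) ∪ {2*π} := by
    ext θ
    simp only [Set.mem_Ioc, Set.mem_Ioo, Set.mem_union, Set.mem_singleton_iff]
    constructor
    · rintro ⟨h1, h2⟩
      rcases h2.eq_or_lt with h | h
      · exact Or.inr h
      · exact Or.inl ⟨h1, h⟩
    · rintro (⟨h1, h2⟩ | rfl) <;> constructor <;> linarith
  rw [this, Set.image_union, Set.image_singleton]
  refine le_trans (measure_union_le _ _) ?_
  rw [hm_singleton, add_zero]
  exact le_of_eq (by simpa using arc_measure' (by linarith : (0:ℝ) ≤ 2*π) (by linarith : 2*π - 0 ≤ 2*π))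


noncomputable def T : ℂ ≃ᵢ EuclideanSpace ℝ (Fin 2) :=
  Complex.orthonormalBasisOneI.repr.toIsometryEquiv

lemma T_apply (z : ℂ) : T z 1 = z.im := by
  show Complex.orthonormalBasisOneI.repr z 1 = z.im
  rw [Complex.orthonormalBasisOneI_repr_apply]
  simp

lemma T_zero : T 0 = 0 :=
  map_zero Complex.orthonormalBasisOneI.repr

lemma T_sphere : T ⁻¹' (Metric.sphere 0 1) = Metric.sphere (0:ℂ) 1 := by
  ext z
  simp only [Set.mem_preimage, Metric.mem_sphere]
  rw [← T_zero, IsometryEquiv.dist_eq]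

lemma transfer (A : Set (EuclideanSpace ℝ (Fin 2))) :
    circleMeasure A = μH[1] ((T ⁻¹' A) ∩ Metric.sphere (0:ℂ) 1) := by
  rw [circleMeasure, Measure.restrict_apply' (Metric.isClosed_sphere.measurableSet)]
  rw [← IsometryEquiv.hausdorffMeasure_preimage T 1 (A ∩ Metric.sphere 0 1)]
  rw [Set.preimage_inter, T_sphere]

lemma cond_iff {s : ℝ} (hs : 0 < s) (y : ℝ) :
    (s < |y| ^ (-(1 / 2) : ℝ)) ↔ (0 < |y| ∧ |y| < 1 / s ^ 2) := by
  rcases (abs_nonneg y).eq_or_lt with h0 | h0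
  · rw [← h0, Real.zero_rpow (by norm_num)]
    simp only [lt_irrefl, false_and, iff_false, not_lt]
    exact hs.le
  · have hsqrt : |y| ^ (-(1 / 2) : ℝ) = (Real.sqrt |y|)⁻¹ := by
      rw [Real.rpow_neg (abs_nonneg y), Real.sqrt_eq_rpow]
    rw [hsqrt]
    have hsq : 0 < Real.sqrt |y| := Real.sqrt_pos.mpr h0
    have key : s < (Real.sqrt |y|)⁻¹ ↔ |y| < 1 / s ^ 2 := by
      rw [lt_inv_comm₀ hs hsq, Real.sqrt_lt' (by positivity : (0:ℝ) < s⁻¹),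
        inv_pow, one_div]
    rw [key]
    exact ⟨fun h => ⟨h0, h⟩, fun h => h.2⟩
lemma gOne_nonneg (x : EuclideanSpace ℝ (Fin 2)) : 0 ≤ gOne x :=
  Real.rpow_nonneg (abs_nonneg _) _

lemma preimage_set {s : ℝ} (hs : 0 < s) :
    (T ⁻¹' {x | s < |gOne x|}) = {z : ℂ | 0 < |z.im| ∧ |z.im| < 1 / s ^ 2} := by
  ext z
  simp only [Set.mem_preimage, Set.mem_setOf_eq, gOne]
  rw [T_apply, _root_.abs_of_nonneg (Real.rpow_nonneg (abs_nonneg _) _)]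
  exact cond_iff hs z.im

lemma alpha_lt_one {s : ℝ} (hs0 : 0 < s) (hs1 : s < 1) :
    circleMeasure {x | s < |gOne x|} = ENNReal.ofReal (2 * π) := by
  rw [transfer, preimage_set hs0]
  have : {z : ℂ | 0 < |z.im| ∧ |z.im| < 1 / s ^ 2} ∩ Metric.sphere 0 1
      = {z : ℂ | 0 < |z.im|} ∩ Metric.sphere 0 1 := by
    ext z
    simp only [Set.mem_inter_iff, Set.mem_setOf_eq, Metric.mem_sphere, Complex.dist_eq,
      sub_zero, and_congr_left_iff]
    intro hz
    have him : |z.im| ≤ 1 := by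
      calc |z.im| ≤ ‖z‖ := Complex.abs_im_le_norm z
        _ = 1 := hz
    have h1 : (1:ℝ) < 1 / s ^ 2 := by
      rw [lt_div_iff₀ (by positivity)]
      nlinarith
    constructor
    · exact fun h => h.1
    · exact fun h => ⟨h, by linarith⟩
  rw [this, measure_window']

lemma alpha_ge_one {s : ℝ} (hs : 1 ≤ s) :
    circleMeasure {x | s < |gOne x|} = ENNReal.ofReal (4 * Real.arcsin (1 / s ^ 2)) := by
  have hs0 : 0 < s := by linarith
  rw [transfer, preimage_set hs0, measure_window (by positivity)
    (by rw [div_le_one (by positivity)]; nlinarith)]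

lemma circleMeasure_le (A : Set (EuclideanSpace ℝ (Fin 2))) :
    circleMeasure A ≤ ENNReal.ofReal (2 * π) :=
  le_trans (by rw [transfer]; exact measure_mono inter_subset_right) circle_total

lemma circleMeasure_ne_top (A : Set (EuclideanSpace ℝ (Fin 2))) :
    circleMeasure A ≠ ⊤ :=
  ne_top_of_le_ne_top ENNReal.ofReal_ne_top (circleMeasure_le A)

/-- properties of the critical value `r t = sin(t/4)^{-1/2}` -/
lemma rt_props {t : ℝ} (ht : t ∈ Ioo (0:ℝ) (2*π)) :
    0 < Real.sin (t/4) ∧ Real.sin (t/4) ≤ 1 ∧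
      1 ≤ (Real.sin (t/4)) ^ (-(1/2) : ℝ) ∧
      1 / ((Real.sin (t/4)) ^ (-(1/2) : ℝ)) ^ 2 = Real.sin (t/4) := by
  have hpi := Real.pi_pos
  obtain ⟨ht0, ht2⟩ := ht
  have hy0 : 0 < Real.sin (t/4) :=
    Real.sin_pos_of_pos_of_lt_pi (by linarith) (by linarith)
  have hy1 : Real.sin (t/4) ≤ 1 := Real.sin_le_one _
  refine ⟨hy0, hy1, ?_, ?_⟩
  · exact Real.one_le_rpow_of_pos_of_le_one_of_nonpos hy0 hy1 (by norm_num)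
  · rw [← Real.rpow_natCast ((Real.sin (t/4)) ^ (-(1/2) : ℝ)) 2,
      ← Real.rpow_mul hy0.le]
    norm_num
    rw [Real.rpow_neg_one]
    simp
lemma rearr_set_eq {t : ℝ} (ht : t ∈ Ioo (0:ℝ) (2*π)) :
    {s : ℝ | 0 < s ∧ (circleMeasure {x | s < |gOne x|}).toReal < t}
      = Ioi ((Real.sin (t/4)) ^ (-(1/2) : ℝ)) := by
  have hpi := Real.pi_pos
  obtain ⟨hy0, hy1, hr1, hrsq⟩ := rt_props ht
  set r := (Real.sin (t/4)) ^ (-(1/2) : ℝ) with hr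
  have hr0 : 0 < r := lt_of_lt_of_le one_pos hr1
  have harc : Real.arcsin (Real.sin (t/4)) = t/4 :=
    Real.arcsin_sin (by linarith [ht.1]) (by linarith [ht.2])
  ext s
  simp only [Set.mem_setOf_eq, Set.mem_Ioi]
  constructor
  · rintro ⟨hs0, hlt⟩
    by_contra hle
    push_neg at hle
    rcases lt_or_ge s 1 with h1 | h1
    · rw [alpha_lt_one hs0 h1, ENNReal.toReal_ofReal (by positivity)] at hlt
      linarith [ht.2]
    · rw [alpha_ge_one h1, ENNReal.toReal_ofReal
        (mul_nonneg (by norm_num) (Real.arcsin_nonneg.mpr (by positivity)))] at hlt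
      have hs2 : Real.sin (t/4) ≤ 1 / s ^ 2 := by
        rw [← hrsq]
        exact one_div_le_one_div_of_le (by positivity)
          (pow_le_pow_left₀ hs0.le hle 2)
      have h4 : t/4 ≤ Real.arcsin (1 / s^2) := by
        rw [← harc]
        exact Real.monotone_arcsin hs2
      linarith
  · intro hrs
    have hs1 : 1 ≤ s := le_trans hr1 hrs.le
    have hs0 : 0 < s := by linarith
    refine ⟨hs0, ?_⟩
    rw [alpha_ge_one hs1, ENNReal.toReal_ofReal
      (mul_nonneg (by norm_num) (Real.arcsin_nonneg.mpr (by positivity)))]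
    have hlt : 1 / s ^ 2 < Real.sin (t/4) := by
      rw [← hrsq]
      apply div_lt_div_of_pos_left one_pos (by positivity)
      nlinarith
    have harcs : Real.arcsin (1 / s^2) < t/4 := by
      refine (Real.arcsin_lt_iff_lt_sin ⟨by
          have : (0:ℝ) ≤ 1/s^2 := by positivity
          linarith, ?_⟩
        ⟨by linarith [ht.1], by linarith [ht.2]⟩).mpr hlt
      have : (1:ℝ) ≤ s ^ 2 := by nlinarith
      rw [div_le_one (by positivity)]
      exact this
    linarith

lemma rearr_gOne {t : ℝ} (ht : t ∈ Ioo (0:ℝ) (2*π)) :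
    rearr circleMeasure gOne t = (Real.sin (t/4)) ^ (-(1/2) : ℝ) := by
  rw [rearr, rearr_set_eq ht, csInf_Ioi]


lemma four_rpow : (4:ℝ) ^ ((1:ℝ)/2) = 2 := by
  rw [show (4:ℝ) = 2^(2:ℕ) by norm_num, ← Real.rpow_natCast 2 2,
    ← Real.rpow_mul (by norm_num : (0:ℝ) ≤ 2)]
  norm_num

lemma prod_ident {t : ℝ} (ht : t ∈ Ioo (0:ℝ) (2*π)) :
    2 * (Real.sin (t/4) / (t/4)) ^ (-(1/2) : ℝ)
      = t ^ ((1:ℝ)/2) * (Real.sin (t/4)) ^ (-(1/2) : ℝ) := by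
  have hpi := Real.pi_pos
  have ht0 : 0 < t := ht.1
  have hy0 : 0 < Real.sin (t/4) :=
    Real.sin_pos_of_pos_of_lt_pi (by linarith) (by linarith [ht.2])
  rw [Real.div_rpow hy0.le (by positivity)]
  have h4 : (t/4 : ℝ) ^ (-(1/2) : ℝ) = 2 * t ^ (-(1/2) : ℝ) := by
    rw [Real.div_rpow ht0.le (by norm_num : (0:ℝ) ≤ 4),
      Real.rpow_neg (by norm_num : (0:ℝ) ≤ 4), four_rpow, div_eq_mul_inv, inv_inv, mul_comm]
  have hts : t ^ (-(1/2) : ℝ) = (t ^ ((1:ℝ)/2))⁻¹ := by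
    rw [← Real.rpow_neg ht0.le]
  rw [h4, hts]
  have hB : t ^ ((1:ℝ)/2) ≠ 0 := by positivity
  field_simp

lemma tendsto_w : Tendsto (fun t : ℝ => Real.sin (t/4) / (t/4)) (𝓝[>] (0:ℝ)) (𝓝 1) := by
  have hslope := hasDerivAt_iff_tendsto_slope.mp (Real.hasDerivAt_sin 0)
  rw [Real.cos_zero] at hslope
  have h14 : Tendsto (fun t : ℝ => t/4) (𝓝[>] (0:ℝ)) (𝓝[≠] (0:ℝ)) := by
    apply tendsto_nhdsWithin_of_tendsto_nhds_of_eventually_within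
    · have : Tendsto (fun t : ℝ => t/4) (𝓝 (0:ℝ)) (𝓝 ((0:ℝ)/4)) :=
        (continuous_id.div_const 4).tendsto 0
      simpa using this.mono_left nhdsWithin_le_nhds
    · filter_upwards [self_mem_nhdsWithin] with t (ht : t ∈ Ioi (0:ℝ))
      have : (0:ℝ) < t := ht
      simp only [Set.mem_compl_iff, Set.mem_singleton_iff]
      positivity
  have := hslope.comp h14
  apply this.congr
  intro t
  simp [slope_def_field, Function.comp]

lemma tendsto_prod :
    Tendsto (fun t : ℝ => t ^ ((1:ℝ)/2) * (Real.sin (t/4)) ^ (-(1/2) : ℝ))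
      (𝓝[>] (0:ℝ)) (𝓝 2) := by
  have hcont : ContinuousAt (fun x : ℝ => x ^ (-(1/2) : ℝ)) 1 :=
    Real.continuousAt_rpow_const 1 _ (Or.inl one_ne_zero)
  have h1 : Tendsto (fun t : ℝ => (Real.sin (t/4) / (t/4)) ^ (-(1/2) : ℝ))
      (𝓝[>] (0:ℝ)) (𝓝 (1 ^ (-(1/2) : ℝ))) := hcont.tendsto.comp tendsto_w
  rw [Real.one_rpow] at h1
  have h2 := h1.const_mul 2
  rw [mul_one] at h2
  apply h2.congr'
  filter_upwards [Ioo_mem_nhdsGT_of_mem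
    (⟨le_refl (0:ℝ), by positivity⟩ : (0:ℝ) ∈ Ico (0:ℝ) (2*π))] with t ht
  exact prod_ident ht

lemma tendsto_main :
    Tendsto (fun t => t ^ ((1 : ℝ) / 2) * rearr circleMeasure gOne t)
      (𝓝[>] (0:ℝ)) (𝓝 2) := by
  apply tendsto_prod.congr'
  filter_upwards [Ioo_mem_nhdsGT_of_mem
    (⟨le_refl (0:ℝ), by positivity⟩ : (0:ℝ) ∈ Ico (0:ℝ) (2*π))] with t ht
  rw [rearr_gOne ht]

lemma prod_bound {t : ℝ} (ht : t ∈ Ioo (0:ℝ) (2*π)) :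
    t ^ ((1:ℝ)/2) * (Real.sin (t/4)) ^ (-(1/2) : ℝ) ≤ (2*π) ^ ((1:ℝ)/2) := by
  have hpi := Real.pi_pos
  have ht0 : 0 < t := ht.1
  have hy0 : 0 < Real.sin (t/4) :=
    Real.sin_pos_of_pos_of_lt_pi (by linarith) (by linarith [ht.2])
  have hJ : t / (2*π) ≤ Real.sin (t/4) := by
    have := Real.mul_le_sin (x := t/4) (by linarith) (by linarith [ht.2])
    calc t / (2*π) = 2 / π * (t/4) := by field_simp; ring
      _ ≤ Real.sin (t/4) := this
  have h1 : (Real.sin (t/4)) ^ (-(1/2) : ℝ) ≤ (t / (2*π)) ^ (-(1/2) : ℝ) :=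
    Real.rpow_le_rpow_of_nonpos (by positivity) hJ (by norm_num)
  have h2 : (t / (2*π)) ^ (-(1/2) : ℝ) = (2*π) ^ ((1:ℝ)/2) / t ^ ((1:ℝ)/2) := by
    rw [Real.div_rpow ht0.le (by positivity), Real.rpow_neg ht0.le,
      Real.rpow_neg (by positivity : (0:ℝ) ≤ 2*π), inv_div_inv]
  calc t ^ ((1:ℝ)/2) * (Real.sin (t/4)) ^ (-(1/2) : ℝ)
      ≤ t ^ ((1:ℝ)/2) * ((t / (2*π)) ^ (-(1/2) : ℝ)) :=
        mul_le_mul_of_nonneg_left h1 (by positivity)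
    _ = (2*π) ^ ((1:ℝ)/2) := by
        rw [h2, mul_div_assoc']
        rw [mul_comm, mul_div_assoc, div_self (by positivity : t ^ ((1:ℝ)/2) ≠ 0), mul_one]

lemma cm_mono_sphere {A A' : Set (EuclideanSpace ℝ (Fin 2))}
    (h : A ∩ Metric.sphere 0 1 ⊆ A' ∩ Metric.sphere 0 1) :
    circleMeasure A ≤ circleMeasure A' := by
  rw [circleMeasure, Measure.restrict_apply' Metric.isClosed_sphere.measurableSet,
    Measure.restrict_apply' Metric.isClosed_sphere.measurableSet]
  exact measure_mono h

lemma alpha_toReal_at_r {t' : ℝ} (ht' : t' ∈ Ioo (0:ℝ) (2*π)) :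
    (circleMeasure {x | (Real.sin (t'/4)) ^ (-(1/2) : ℝ) < |gOne x|}).toReal = t' := by
  obtain ⟨hy0, hy1, hr1, hrsq⟩ := rt_props ht'
  rw [alpha_ge_one hr1, hrsq,
    Real.arcsin_sin (by linarith [ht'.1, Real.pi_pos]) (by linarith [ht'.2, Real.pi_pos]),
    ENNReal.toReal_ofReal (by linarith [ht'.1])]
  ring

/-- membership of `B + r(t/2)` in the rearrangement set for `gOne - f` -/
lemma mem_S {f : EuclideanSpace ℝ (Fin 2) → ℝ} {B : ℝ} (hB : 0 ≤ B)
    (hf : ∀ x ∈ Metric.sphere (0 : EuclideanSpace ℝ (Fin 2)) 1, |f x| ≤ B)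
    {t : ℝ} (ht : t ∈ Ioo (0:ℝ) (2*π)) :
    B + (Real.sin ((t/2)/4)) ^ (-(1/2) : ℝ)
      ∈ {s : ℝ | 0 < s ∧ (circleMeasure {x | s < |gOne x - f x|}).toReal < t} := by
  have ht2 : t/2 ∈ Ioo (0:ℝ) (2*π) := ⟨by linarith [ht.1], by linarith [ht.2, Real.pi_pos]⟩
  obtain ⟨hy0, hy1, hr1, hrsq⟩ := rt_props ht2
  set r' := (Real.sin ((t/2)/4)) ^ (-(1/2) : ℝ) with hr'
  refine ⟨by linarith, ?_⟩
  have hincl : {x | B + r' < |gOne x - f x|} ∩ Metric.sphere 0 1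
      ⊆ {x | r' < |gOne x|} ∩ Metric.sphere 0 1 := by
    rintro x ⟨hx, hxs⟩
    refine ⟨?_, hxs⟩
    simp only [Set.mem_setOf_eq] at hx ⊢
    have h1 : |gOne x - f x| ≤ |gOne x| + |f x| := abs_sub _ _
    have h2 : |f x| ≤ B := hf x hxs
    linarith
  have hle : circleMeasure {x | B + r' < |gOne x - f x|}
      ≤ circleMeasure {x | r' < |gOne x|} := cm_mono_sphere hincl
  have := ENNReal.toReal_mono (circleMeasure_ne_top _) hle
  calc (circleMeasure {x | B + r' < |gOne x - f x|}).toReal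
      ≤ (circleMeasure {x | r' < |gOne x|}).toReal := this
    _ = t/2 := alpha_toReal_at_r ht2
    _ < t := by linarith [ht.1]

lemma rearr_sub_ub {f : EuclideanSpace ℝ (Fin 2) → ℝ} {B : ℝ} (hB : 0 ≤ B)
    (hf : ∀ x ∈ Metric.sphere (0 : EuclideanSpace ℝ (Fin 2)) 1, |f x| ≤ B)
    {t : ℝ} (ht : t ∈ Ioo (0:ℝ) (2*π)) :
    rearr circleMeasure (fun x => gOne x - f x) t
      ≤ B + (Real.sin ((t/2)/4)) ^ (-(1/2) : ℝ) := by
  apply csInf_le ?_ (mem_S hB hf ht)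
  exact ⟨0, fun s hs => hs.1.le⟩

lemma rearr_sub_lb {f : EuclideanSpace ℝ (Fin 2) → ℝ} {B : ℝ} (hB : 0 ≤ B)
    (hf : ∀ x ∈ Metric.sphere (0 : EuclideanSpace ℝ (Fin 2)) 1, |f x| ≤ B)
    {t : ℝ} (ht : t ∈ Ioo (0:ℝ) (2*π)) :
    (Real.sin (t/4)) ^ (-(1/2) : ℝ) - B
      ≤ rearr circleMeasure (fun x => gOne x - f x) t := by
  obtain ⟨hy0, hy1, hr1, hrsq⟩ := rt_props ht
  set r := (Real.sin (t/4)) ^ (-(1/2) : ℝ) with hr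
  have harc : Real.arcsin (Real.sin (t/4)) = t/4 :=
    Real.arcsin_sin (by linarith [ht.1, Real.pi_pos]) (by linarith [ht.2, Real.pi_pos])
  apply le_csInf ⟨_, mem_S hB hf ht⟩
  rintro b ⟨hb0, hblt⟩
  by_contra hcon
  push_neg at hcon
  -- hcon : b < r - B
  have hincl : {x | b + B < |gOne x|} ∩ Metric.sphere 0 1
      ⊆ {x | b < |gOne x - f x|} ∩ Metric.sphere 0 1 := by
    rintro x ⟨hx, hxs⟩
    refine ⟨?_, hxs⟩
    simp only [Set.mem_setOf_eq] at hx ⊢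
    have h1 : |gOne x| - |f x| ≤ |gOne x - f x| := abs_sub_abs_le_abs_sub _ _
    have h2 : |f x| ≤ B := hf x hxs
    linarith
  have hle : circleMeasure {x | b + B < |gOne x|}
      ≤ circleMeasure {x | b < |gOne x - f x|} := cm_mono_sphere hincl
  have hmono := ENNReal.toReal_mono (circleMeasure_ne_top _) hle
  have hge : t ≤ (circleMeasure {x | b + B < |gOne x|}).toReal := by
    rcases lt_or_ge (b + B) 1 with h1 | h1
    · rw [alpha_lt_one (by linarith) h1, ENNReal.toReal_ofReal (by positivity)]
      linarith [ht.2]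
    · rw [alpha_ge_one h1, ENNReal.toReal_ofReal
        (mul_nonneg (by norm_num) (Real.arcsin_nonneg.mpr (by positivity)))]
      have hs2 : Real.sin (t/4) ≤ 1 / (b + B) ^ 2 := by
        rw [← hrsq]
        exact one_div_le_one_div_of_le (by positivity)
          (pow_le_pow_left₀ (by positivity) (by linarith) 2)
      have h4 : t/4 ≤ Real.arcsin (1 / (b + B)^2) := by
        rw [← harc]
        exact Real.monotone_arcsin hs2
      linarith
  linarith


lemma conj4 : BddAbove
    ((fun t => t ^ ((1 : ℝ) / 2) * rearr circleMeasure gOne t) '' Ioo 0 (2 * π)) := by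
  refine ⟨(2*π) ^ ((1:ℝ)/2), ?_⟩
  rintro x ⟨t, ht, rfl⟩
  simp only
  rw [rearr_gOne ht]
  exact prod_bound ht

lemma image_bdd {f : EuclideanSpace ℝ (Fin 2) → ℝ} {B : ℝ} (hB : 0 ≤ B)
    (hf : ∀ x ∈ Metric.sphere (0 : EuclideanSpace ℝ (Fin 2)) 1, |f x| ≤ B) :
    BddAbove ((fun t => t ^ ((1 : ℝ) / 2)
        * rearr circleMeasure (fun x => gOne x - f x) t) '' Ioo 0 (2 * π)) := by
  have hpi := Real.pi_pos
  refine ⟨(2*π) ^ ((1:ℝ)/2) * B + (2:ℝ) ^ ((1:ℝ)/2) * (2*π) ^ ((1:ℝ)/2), ?_⟩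
  rintro x ⟨t, ht, rfl⟩
  simp only
  have ht2 : t/2 ∈ Ioo (0:ℝ) (2*π) := ⟨by linarith [ht.1], by linarith [ht.2]⟩
  have hub := rearr_sub_ub hB hf ht
  have h0 : (0:ℝ) ≤ t ^ ((1:ℝ)/2) := Real.rpow_nonneg ht.1.le _
  calc t ^ ((1:ℝ)/2) * rearr circleMeasure (fun x => gOne x - f x) t
      ≤ t ^ ((1:ℝ)/2) * (B + (Real.sin ((t/2)/4)) ^ (-(1/2) : ℝ)) :=
        mul_le_mul_of_nonneg_left hub h0
    _ = t ^ ((1:ℝ)/2) * B + t ^ ((1:ℝ)/2) * (Real.sin ((t/2)/4)) ^ (-(1/2) : ℝ) := by ring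
    _ ≤ (2*π) ^ ((1:ℝ)/2) * B + (2:ℝ) ^ ((1:ℝ)/2) * (2*π) ^ ((1:ℝ)/2) := by
        have hb1 : t ^ ((1:ℝ)/2) ≤ (2*π) ^ ((1:ℝ)/2) :=
          Real.rpow_le_rpow ht.1.le ht.2.le (by norm_num)
        have hsplit : t ^ ((1:ℝ)/2) = (2:ℝ) ^ ((1:ℝ)/2) * (t/2) ^ ((1:ℝ)/2) := by
          rw [← Real.mul_rpow (by norm_num) (by linarith [ht.1])]
          congr 1
          ring
        have hb2 : t ^ ((1:ℝ)/2) * (Real.sin ((t/2)/4)) ^ (-(1/2) : ℝ)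
            ≤ (2:ℝ) ^ ((1:ℝ)/2) * (2*π) ^ ((1:ℝ)/2) := by
          rw [hsplit, mul_assoc]
          apply mul_le_mul_of_nonneg_left ?_ (by positivity)
          exact prod_bound ht2
        have := mul_le_mul_of_nonneg_right hb1 hB
        linarith

lemma conj6 (F : ℕ → EuclideanSpace ℝ (Fin 2) → ℝ) (hF : ∀ n, ContDiff ℝ 1 (F n)) :
    ¬ Tendsto (fun n => sSup ((fun t =>
          t ^ ((1 : ℝ) / 2) * rearr circleMeasure (fun x => gOne x - F n x) t)
            '' Ioo 0 (2 * π))) atTop (𝓝 0) := by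
  have hpi := Real.pi_pos
  intro htend
  have key : ∀ n, (1:ℝ) ≤ sSup ((fun t =>
      t ^ ((1 : ℝ) / 2) * rearr circleMeasure (fun x => gOne x - F n x) t)
        '' Ioo 0 (2 * π)) := by
    intro n
    obtain ⟨C, hC⟩ := (isCompact_sphere (0 : EuclideanSpace ℝ (Fin 2)) 1
      ).exists_bound_of_continuousOn (hF n).continuous.continuousOn
    set B := max C 0 with hBdef
    have hB0 : 0 ≤ B := le_max_right _ _
    have hfB : ∀ x ∈ Metric.sphere (0 : EuclideanSpace ℝ (Fin 2)) 1, |F n x| ≤ B :=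
      fun x hx => le_trans (by simpa [Real.norm_eq_abs] using hC x hx) (le_max_left _ _)
    -- find a good t
    have hrp : Tendsto (fun t : ℝ => t ^ ((1:ℝ)/2)) (𝓝[>] (0:ℝ)) (𝓝 0) := by
      have := (Real.continuousAt_rpow_const 0 ((1:ℝ)/2) (Or.inr (by norm_num))).tendsto
      rw [Real.zero_rpow (by norm_num : ((1:ℝ)/2) ≠ 0)] at this
      exact this.mono_left nhdsWithin_le_nhds
    have ht2 : Tendsto (fun t : ℝ => t ^ ((1:ℝ)/2) * (Real.sin (t/4)) ^ (-(1/2) : ℝ)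
        - t ^ ((1:ℝ)/2) * B) (𝓝[>] (0:ℝ)) (𝓝 (2 - 0)) :=
      tendsto_prod.sub (by simpa using hrp.mul_const B)
    have hev1 : ∀ᶠ t in 𝓝[>] (0:ℝ),
        1 < t ^ ((1:ℝ)/2) * (Real.sin (t/4)) ^ (-(1/2) : ℝ) - t ^ ((1:ℝ)/2) * B :=
      ht2.eventually (eventually_gt_nhds (by norm_num))
    obtain ⟨t, ht1, htI⟩ := (hev1.and (Ioo_mem_nhdsGT_of_mem
      (⟨le_rfl, by positivity⟩ : (0:ℝ) ∈ Ico (0:ℝ) (2*π)))).exists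
    have hlb := rearr_sub_lb hB0 hfB htI
    have h0 : (0:ℝ) ≤ t ^ ((1:ℝ)/2) := Real.rpow_nonneg htI.1.le _
    have elem : (1:ℝ) ≤ t ^ ((1 : ℝ) / 2)
        * rearr circleMeasure (fun x => gOne x - F n x) t := by
      have := mul_le_mul_of_nonneg_left hlb h0
      calc (1:ℝ) ≤ t ^ ((1:ℝ)/2) * (Real.sin (t/4)) ^ (-(1/2) : ℝ)
            - t ^ ((1:ℝ)/2) * B := ht1.le
        _ = t ^ ((1:ℝ)/2) * ((Real.sin (t/4)) ^ (-(1/2) : ℝ) - B) := by ring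
        _ ≤ _ := this
    exact le_trans elem (le_csSup (image_bdd hB0 hfB) ⟨t, htI, rfl⟩)
  have hev := htend.eventually (eventually_lt_nhds zero_lt_one)
  obtain ⟨n, hn⟩ := hev.exists
  linarith [key n]

end CWE

/-- On the unit circle, `g₁(x,y) = |y|^{-1/2}` has distribution function `2π` for `0<s<1`
and `4 arcsin(1/s²)` for `s ≥ 1`, decreasing rearrangement `g₁*(t) = (csc(t/4))^{1/2}`;
consequently `g₁ ∈ L^{2,∞}(∂Ω)` but `lim_{t→0} t^{1/2} g₁*(t) > 0`, so `g₁` does not lie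
in the closure of `C¹(∂Ω)` in `L^{2,∞}(∂Ω)` (no sequence of restrictions of `C¹`
functions converges to `g₁` in the weak-`L²` quasinorm). -/
theorem circle_weight_example :
    (∀ s : ℝ, 0 < s → s < 1 →
        circleMeasure {x | s < |gOne x|} = ENNReal.ofReal (2 * π)) ∧
    (∀ s : ℝ, 1 ≤ s →
        circleMeasure {x | s < |gOne x|} = ENNReal.ofReal (4 * Real.arcsin (1 / s ^ 2))) ∧
    (∀ t ∈ Ioo (0 : ℝ) (2 * π),
        rearr circleMeasure gOne t = (Real.sin (t / 4)) ^ (-(1 / 2) : ℝ)) ∧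
    BddAbove ((fun t => t ^ ((1 : ℝ) / 2) * rearr circleMeasure gOne t) '' Ioo 0 (2 * π)) ∧
    (∃ c > (0 : ℝ), Tendsto (fun t => t ^ ((1 : ℝ) / 2) * rearr circleMeasure gOne t)
        (𝓝[>] 0) (𝓝 c)) ∧
    (∀ F : ℕ → EuclideanSpace ℝ (Fin 2) → ℝ, (∀ n, ContDiff ℝ 1 (F n)) →
        ¬ Tendsto (fun n => sSup ((fun t =>
              t ^ ((1 : ℝ) / 2) * rearr circleMeasure (fun x => gOne x - F n x) t)
                '' Ioo 0 (2 * π))) atTop (𝓝 0)) := by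
  refine ⟨fun s hs0 hs1 => CWE.alpha_lt_one hs0 hs1,
    fun s hs => CWE.alpha_ge_one hs,
    fun t ht => CWE.rearr_gOne ht,
    CWE.conj4,
    ⟨2, by norm_num, CWE.tendsto_main⟩,
    CWE.conj6⟩
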